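/- Let K be a category with countable products, F : K ⥤ K an endofunctor with a right adjoint R, and O an object of K. Let (O_∞, d_∞, s_∞) be the terminal object of the category F-Mre of F-Moore machines with output O (with carrier O_∞ = ∏_{n ≥ 0} Rⁿ(O) and F-algebra structure d_∞ : F(O_∞) ⟶ O_∞). Then the functor B : F-Mre ⥤ Alg(F)/(O_∞, d_∞), sending a machine (E,d,s) to the unique F-algebra morphism u_E : (E,d) → (O_∞,d_∞) underlying the unique machine morphism into the terminal machine and acting on morphisms of machines by their underlying algebra morphisms, has a left adjoint. -/

import Mathlib

open CategoryTheory Limits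

universe w w' v u

/-- An `F`-Moore machine with output `O`: a carrier `E` with maps `d : F E ⟶ E`
and `s : E ⟶ O`. -/
structure FMoore {K : Type u} [Category.{v} K] (F : K ⥤ K) (O : K) : Type max u v where
  E : K
  d : F.obj E ⟶ E
  s : E ⟶ O

namespace FMoore

variable {K : Type u} [Category.{v} K] {F : K ⥤ K} {O : K}

/-- A morphism of `F`-Moore machines. -/
@[ext]
structure Hom (M N : FMoore F O) : Type v where
  f : M.E ⟶ N.E
  hd : M.d ≫ f = F.map f ≫ N.d
  hs : M.s = f ≫ N.s

instance : Category (FMoore F O) where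
  Hom := Hom
  id M := ⟨𝟙 M.E, by simp, by simp⟩
  comp u v := ⟨u.f ≫ v.f, by
      rw [F.map_comp, Category.assoc, ← v.hd, ← Category.assoc, u.hd, Category.assoc], by
      rw [Category.assoc, ← v.hs, u.hs]⟩
  id_comp u := Hom.ext (Category.id_comp u.f)
  comp_id u := Hom.ext (Category.comp_id u.f)
  assoc u v w := Hom.ext (Category.assoc u.f v.f w.f)

/-- The underlying `F`-algebra of an `F`-Moore machine. -/
def toAlgebra (F : K ⥤ K) (O : K) : FMoore F O ⥤ Endofunctor.Algebra F where
  obj M := ⟨M.E, M.d⟩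
  map {M N} u := ⟨u.f, u.hd.symm⟩

/-- The behaviour functor `B` into the slice of `F`-algebras over the algebra underlying
a terminal machine `T`, sending a machine `M` to the unique algebra morphism underlying
the unique machine morphism `M ⟶ T`. -/
def behaviour {F : K ⥤ K} {O : K} (T : FMoore F O) (hT : IsTerminal T) :
    FMoore F O ⥤ Over ((toAlgebra F O).obj T) where
  obj M := Over.mk ((toAlgebra F O).map (hT.from M))
  map {M N} u := Over.homMk ((toAlgebra F O).map u) (by
    show (toAlgebra F O).map u ≫ (toAlgebra F O).map (hT.from N) = (toAlgebra F O).map (hT.from M)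
    rw [← Functor.map_comp]
    congr 1
    exact hT.hom_ext _ _)
  map_id M := by
    ext
    exact congrArg Endofunctor.Algebra.Hom.f ((toAlgebra F O).map_id M)
  map_comp u v := by
    ext
    exact congrArg Endofunctor.Algebra.Hom.f ((toAlgebra F O).map_comp u v)

end FMoore

/-- The `n`-fold application of a functor `R` to an object `O`. -/
def iterObj {K : Type u} [Category.{v} K] (R : K ⥤ K) (O : K) : ℕ → K
  | 0 => O
  | n + 1 => R.obj (iterObj R O n)

namespace FMoore

variable {K : Type u} [Category.{v} K] {F : K ⥤ K} {O : K}

@[simp]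
theorem comp_f {M N P : FMoore F O} (u : M ⟶ N) (v : N ⟶ P) :
    (u ≫ v).f = u.f ≫ v.f := rfl

theorem behaviour_isEquivalence (T : FMoore F O) (hT : IsTerminal T) :
    (behaviour T hT).IsEquivalence := by
  have hfrom : ∀ M : FMoore F O, M.s = (hT.from M).f ≫ T.s := fun M => (hT.from M).hs
  have faithful : (behaviour T hT).Faithful := ⟨fun {M N u v} h => by
    apply Hom.ext
    exact congrArg (fun w : (behaviour T hT).obj M ⟶ (behaviour T hT).obj N => w.left.f) h⟩
  have full : (behaviour T hT).Full := ⟨fun {M N} v => by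
    have hw := Over.w v
    have hwf : v.left.f ≫ (hT.from N).f = (hT.from M).f :=
      congrArg Endofunctor.Algebra.Hom.f hw
    refine ⟨⟨v.left.f, v.left.h.symm, ?_⟩, ?_⟩
    · rw [hfrom M, hfrom N]
      exact (congrArg (· ≫ T.s) hwf).symm.trans (Category.assoc _ _ _)
    · apply Over.OverMorphism.ext
      apply Endofunctor.Algebra.Hom.ext
      rfl⟩
  have essSurj : (behaviour T hT).EssSurj := ⟨fun X => by
    let M : FMoore F O := ⟨X.left.a, X.left.str, X.hom.f ≫ T.s⟩
    refine ⟨M, ⟨Over.isoMk (Iso.refl _) ?_⟩⟩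
    show 𝟙 _ ≫ X.hom = (toAlgebra F O).map (hT.from M)
    rw [Category.id_comp]
    have : hT.from M = ⟨X.hom.f, X.hom.h.symm, rfl⟩ :=
      hT.hom_ext _ _
    rw [this]
    apply Endofunctor.Algebra.Hom.ext
    rfl⟩
  exact { faithful := faithful, full := full, essSurj := essSurj }

end FMoore

/-- If `(O_∞, d_∞, s_∞)` is the terminal `F`-Moore machine with output `O`, with carrier
`O_∞ = ∏_{n ≥ 0} Rⁿ O`, then the behaviour functor `B : F-Mre ⥤ Alg(F)/(O_∞, d_∞)` has a
left adjoint. -/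
theorem fMoore_behaviour_isRightAdjoint
    {K : Type u} [Category.{v} K] [HasCountableProducts K]
    (F : K ⥤ K) (R : K ⥤ K) (adj : F ⊣ R) (O : K)
    (dInfty : F.obj (∏ᶜ fun n : ℕ => iterObj R O n) ⟶ ∏ᶜ fun n : ℕ => iterObj R O n)
    (sInfty : (∏ᶜ fun n : ℕ => iterObj R O n) ⟶ O)
    (hT : IsTerminal (FMoore.mk (∏ᶜ fun n : ℕ => iterObj R O n) dInfty sInfty)) :
    (FMoore.behaviour _ hT).IsRightAdjoint := by
  haveI := FMoore.behaviour_isEquivalence _ hT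
  exact Functor.isRightAdjoint_of_isEquivalence
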